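/- A càdlàg process X is a quasi-martingale (difference of two nonnegative supermartingales) if and only if there exists a minimal decomposition X = \bar X^1 - \bar X^2 (the Rao decomposition) such that for any decomposition X = X^1 - X^2 as a difference of two nonnegative supermartingales, X^1 \ge \bar X^1 and X^2 \ge \bar X^2. -/

import Mathlib

open MeasureTheory Set Filter

namespace RaoAux

variable {Ω : Type*} {m0 : MeasurableSpace Ω} {P : Measure Ω} {ℱ : Filtration ℝ m0}

/-- The infimum of two real-valued supermartingales is a supermartingale. -/
theorem supermartingale_inf {f g : ℝ → Ω → ℝ} (hf : Supermartingale f ℱ P)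
    (hg : Supermartingale g ℱ P) :
    Supermartingale (fun t ω => f t ω ⊓ g t ω) ℱ P := by
  refine ⟨fun i => @StronglyMeasurable.inf _ _ _ _ (ℱ i) _ _ _ (hf.stronglyAdapted i) (hg.stronglyAdapted i),
    fun i j hij => ?_,
    fun i => (hf.integrable i).inf (hg.integrable i)⟩
  have hint : Integrable (fun ω => f j ω ⊓ g j ω) P :=
    (hf.integrable j).inf (hg.integrable j)
  have h1 : P[(fun ω => f j ω ⊓ g j ω)|ℱ i] ≤ᵐ[P] f i :=
    (condExp_mono hint (hf.integrable j)
      (Eventually.of_forall fun ω => inf_le_left)).trans (hf.condExp_ae_le hij)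
  have h2 : P[(fun ω => f j ω ⊓ g j ω)|ℱ i] ≤ᵐ[P] g i :=
    (condExp_mono hint (hg.integrable j)
      (Eventually.of_forall fun ω => inf_le_right)).trans (hg.condExp_ae_le hij)
  filter_upwards [h1, h2] with ω ha hb
  exact le_inf ha hb

/-- The expectation of a supermartingale is antitone in time. -/
theorem integral_anti [IsProbabilityMeasure P] {f : ℝ → Ω → ℝ}
    (hf : Supermartingale f ℱ P) : Antitone fun t => ∫ ω, f t ω ∂P := by
  intro s t hst
  calc ∫ ω, f t ω ∂P = ∫ ω, (P[f t|ℱ s]) ω ∂P := (integral_condExp (ℱ.le s)).symm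
    _ ≤ ∫ ω, f s ω ∂P :=
      integral_mono_ae integrable_condExp (hf.integrable s) (hf.condExp_ae_le hst)

/-- A pointwise decreasing infimum of nonnegative supermartingales is a supermartingale. -/
theorem supermartingale_iInf {Z : ℕ → ℝ → Ω → ℝ} (hZ : ∀ N, Supermartingale (Z N) ℱ P)
    (hanti : ∀ t ω, Antitone fun N => Z N t ω) (hpos : ∀ N t ω, 0 ≤ Z N t ω) :
    Supermartingale (fun t ω => ⨅ N, Z N t ω) ℱ P := by
  have hbdd : ∀ t ω, BddBelow (Set.range fun N => Z N t ω) := by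
    intro t ω
    refine ⟨0, ?_⟩
    rintro r ⟨N, rfl⟩
    exact hpos N t ω
  have htd : ∀ t ω, Tendsto (fun N => Z N t ω) atTop (nhds (⨅ N, Z N t ω)) := fun t ω =>
    tendsto_atTop_ciInf (hanti t ω) (hbdd t ω)
  have hle : ∀ N t ω, (⨅ M, Z M t ω) ≤ Z N t ω := fun N t ω => ciInf_le (hbdd t ω) N
  have hge : ∀ t ω, 0 ≤ ⨅ N, Z N t ω := fun t ω => le_ciInf fun N => hpos N t ω
  have hmeas : ∀ i, StronglyMeasurable[ℱ i] (fun ω => ⨅ N, Z N i ω) := by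
    intro i
    exact stronglyMeasurable_of_tendsto atTop (fun N => (hZ N).stronglyAdapted i)
      (tendsto_pi_nhds.2 fun ω => htd i ω)
  have hint : ∀ i, Integrable (fun ω => ⨅ N, Z N i ω) P := by
    intro i
    refine Integrable.mono' ((hZ 0).integrable i)
      (((hmeas i).mono (ℱ.le i)).aestronglyMeasurable) ?_
    refine Eventually.of_forall fun ω => ?_
    rw [Real.norm_eq_abs, abs_of_nonneg (hge i ω)]
    exact hle 0 i ω
  refine ⟨hmeas, fun i j hij => ?_, hint⟩
  have key : ∀ N, P[(fun ω => ⨅ M, Z M j ω)|ℱ i] ≤ᵐ[P] Z N i := fun N =>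
    (condExp_mono (hint j) ((hZ N).integrable j)
      (Eventually.of_forall fun ω => hle N j ω)).trans ((hZ N).condExp_ae_le hij)
  have hall : ∀ᵐ ω ∂P, ∀ N, (P[(fun ω => ⨅ M, Z M j ω)|ℱ i]) ω ≤ Z N i ω :=
    ae_all_iff.2 key
  filter_upwards [hall] with ω hω
  exact le_ciInf fun N => hω N

/-- Pairwise infimum of a pair of processes. -/
def pairInf (p q : (ℝ → Ω → ℝ) × (ℝ → Ω → ℝ)) : (ℝ → Ω → ℝ) × (ℝ → Ω → ℝ) :=
  (fun t ω => p.1 t ω ⊓ q.1 t ω, fun t ω => p.2 t ω ⊓ q.2 t ω)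

/-- Running infimum of a sequence of pairs of processes. -/
def runInf (g : ℕ → (ℝ → Ω → ℝ) × (ℝ → Ω → ℝ)) : ℕ → (ℝ → Ω → ℝ) × (ℝ → Ω → ℝ)
  | 0 => g 0
  | (N + 1) => pairInf (runInf g N) (g (N + 1))

end RaoAux

open RaoAux

/-- A càdlàg adapted process `X` on `[0,T]` is a quasi-martingale (a difference of two
nonnegative supermartingales) if and only if it admits a minimal (Rao) decomposition
`X = B1 - B2` into nonnegative supermartingales, i.e. such that every decomposition
`X = X1 - X2` into nonnegative supermartingales satisfies `X1 ≥ B1` and `X2 ≥ B2`. -/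
theorem quasimartingale_iff_rao_decomposition
    {Ω : Type*} {m : MeasurableSpace Ω} (P : Measure Ω) [IsProbabilityMeasure P]
    (ℱ : Filtration ℝ m) (T : ℝ) (hT : 0 < T)
    (X : ℝ → Ω → ℝ) (hadapted : Adapted ℱ X)
    (hcadlag : ∀ ω, ∀ t ∈ Icc (0:ℝ) T,
      ContinuousWithinAt (fun s => X s ω) (Ici t) t ∧
      ∃ l : ℝ, Tendsto (fun s => X s ω) (nhdsWithin t (Iio t)) (nhds l)) :
    (∃ X1 X2 : ℝ → Ω → ℝ,
        Supermartingale X1 ℱ P ∧ Supermartingale X2 ℱ P ∧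
        (∀ t ω, 0 ≤ X1 t ω) ∧ (∀ t ω, 0 ≤ X2 t ω) ∧
        (∀ t ∈ Icc (0:ℝ) T, ∀ᵐ ω ∂P, X t ω = X1 t ω - X2 t ω))
    ↔ (∃ B1 B2 : ℝ → Ω → ℝ,
        Supermartingale B1 ℱ P ∧ Supermartingale B2 ℱ P ∧
        (∀ t ω, 0 ≤ B1 t ω) ∧ (∀ t ω, 0 ≤ B2 t ω) ∧
        (∀ t ∈ Icc (0:ℝ) T, ∀ᵐ ω ∂P, X t ω = B1 t ω - B2 t ω) ∧
        (∀ X1 X2 : ℝ → Ω → ℝ,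
          Supermartingale X1 ℱ P → Supermartingale X2 ℱ P →
          (∀ t ω, 0 ≤ X1 t ω) → (∀ t ω, 0 ≤ X2 t ω) →
          (∀ t ∈ Icc (0:ℝ) T, ∀ᵐ ω ∂P, X t ω = X1 t ω - X2 t ω) →
          ∀ t ∈ Icc (0:ℝ) T, ∀ᵐ ω ∂P, B1 t ω ≤ X1 t ω ∧ B2 t ω ≤ X2 t ω)) := by
  constructor
  · rintro ⟨A1, A2, hA1, hA2, hA1p, hA2p, hAeq⟩
    classical
    -- the class of decompositions
    set Dcp : (ℝ → Ω → ℝ) × (ℝ → Ω → ℝ) → Prop := fun p =>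
      Supermartingale p.1 ℱ P ∧ Supermartingale p.2 ℱ P ∧
      (∀ t ω, 0 ≤ p.1 t ω) ∧ (∀ t ω, 0 ≤ p.2 t ω) ∧
      (∀ t ∈ Icc (0:ℝ) T, ∀ᵐ ω ∂P, X t ω = p.1 t ω - p.2 t ω) with hDcpDef
    have hA : Dcp (A1, A2) := ⟨hA1, hA2, hA1p, hA2p, hAeq⟩
    -- closed under pairwise infimum
    have hmin : ∀ p q, Dcp p → Dcp q → Dcp (pairInf p q) := by
      rintro p q ⟨hp1, hp2, hp1p, hp2p, hpe⟩ ⟨hq1, hq2, hq1p, hq2p, hqe⟩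
      refine ⟨supermartingale_inf hp1 hq1, supermartingale_inf hp2 hq2,
        fun t ω => le_inf (hp1p t ω) (hq1p t ω), fun t ω => le_inf (hp2p t ω) (hq2p t ω),
        fun t ht => ?_⟩
      filter_upwards [hpe t ht, hqe t ht] with ω h1 h2
      show X t ω = p.1 t ω ⊓ q.1 t ω - p.2 t ω ⊓ q.2 t ω
      rcases le_total (p.2 t ω) (q.2 t ω) with h | h
      · rw [inf_eq_left.2 h, inf_eq_left.2 (by linarith : p.1 t ω ≤ q.1 t ω)]
        linarith
      · rw [inf_eq_right.2 h, inf_eq_right.2 (by linarith : q.1 t ω ≤ p.1 t ω)]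
        linarith
    -- the value function
    set S : ℝ → Set ℝ := fun t => (fun p : (ℝ → Ω → ℝ) × (ℝ → Ω → ℝ) => ∫ ω, p.1 t ω ∂P) ''
      {p | Dcp p} with hSdef
    have hSne : ∀ t, (S t).Nonempty := fun t => ⟨_, ⟨(A1, A2), hA, rfl⟩⟩
    have hSbd : ∀ t, BddBelow (S t) := by
      intro t
      refine ⟨0, ?_⟩
      rintro r ⟨p, hp, rfl⟩
      exact integral_nonneg fun ω => hp.2.2.1 t ω
    set mfun : ℝ → ℝ := fun t => sInf (S t) with hmfunDef
    have hm_le : ∀ p, Dcp p → ∀ t, mfun t ≤ ∫ ω, p.1 t ω ∂P := fun p hp t =>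
      csInf_le (hSbd t) ⟨p, hp, rfl⟩
    have hmAnti : Antitone mfun := by
      intro s t hst
      refine le_csInf (hSne s) ?_
      rintro r ⟨p, hp, rfl⟩
      exact (hm_le p hp t).trans (integral_anti hp.1 hst)
    -- a countable set of times containing all discontinuities of `mfun` and the rationals
    obtain ⟨d, hd⟩ : ∃ d : ℕ → ℝ,
        ({x | ¬ContinuousAt mfun x} ∪ Set.range ((↑) : ℚ → ℝ)) = Set.range d :=
      Set.Countable.exists_eq_range
        (hmAnti.countable_not_continuousAt.union (countable_range _))
        ⟨((0:ℚ):ℝ), Or.inr ⟨0, rfl⟩⟩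
    -- near-optimal decompositions at the times `d k`
    have hwit : ∀ j : ℕ, ∃ p, Dcp p ∧
        ∫ ω, p.1 (d j.unpair.1) ω ∂P < mfun (d j.unpair.1) + 1 / (j.unpair.2 + 1 : ℝ) := by
      intro j
      obtain ⟨r, hrS, hrlt⟩ := exists_lt_of_csInf_lt (hSne (d j.unpair.1))
        (lt_add_of_pos_right _ (by positivity : (0:ℝ) < 1 / (j.unpair.2 + 1 : ℝ)))
      obtain ⟨p, hp, rfl⟩ := hrS
      exact ⟨p, hp, hrlt⟩
    choose g hgD hglt using hwit
    -- running infimum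
    set Z : ℕ → (ℝ → Ω → ℝ) × (ℝ → Ω → ℝ) := runInf g with hZdef
    have hZD : ∀ N, Dcp (Z N) := by
      intro N
      induction N with
      | zero => exact hgD 0
      | succ N ih => exact hmin _ _ ih (hgD (N + 1))
    have hZanti1 : ∀ t ω, Antitone fun N => (Z N).1 t ω := fun t ω =>
      antitone_nat_of_succ_le fun N => inf_le_left
    have hZanti2 : ∀ t ω, Antitone fun N => (Z N).2 t ω := fun t ω =>
      antitone_nat_of_succ_le fun N => inf_le_left
    have hZg : ∀ j t ω, (Z j).1 t ω ≤ (g j).1 t ω := by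
      intro j t ω
      cases j with
      | zero => exact le_rfl
      | succ N => exact inf_le_right
    -- the candidate minimal decomposition
    set B1 : ℝ → Ω → ℝ := fun t ω => ⨅ N, (Z N).1 t ω with hB1def
    set B2 : ℝ → Ω → ℝ := fun t ω => ⨅ N, (Z N).2 t ω with hB2def
    have hbdd1 : ∀ t ω, BddBelow (Set.range fun N => (Z N).1 t ω) := by
      intro t ω; exact ⟨0, by rintro r ⟨N, rfl⟩; exact (hZD N).2.2.1 t ω⟩
    have hbdd2 : ∀ t ω, BddBelow (Set.range fun N => (Z N).2 t ω) := by
      intro t ω; exact ⟨0, by rintro r ⟨N, rfl⟩; exact (hZD N).2.2.2.1 t ω⟩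
    have hB1S : Supermartingale B1 ℱ P :=
      supermartingale_iInf (fun N => (hZD N).1) hZanti1 (fun N t ω => (hZD N).2.2.1 t ω)
    have hB2S : Supermartingale B2 ℱ P :=
      supermartingale_iInf (fun N => (hZD N).2.1) hZanti2 (fun N t ω => (hZD N).2.2.2.1 t ω)
    have hB1p : ∀ t ω, 0 ≤ B1 t ω := fun t ω => le_ciInf fun N => (hZD N).2.2.1 t ω
    have hB2p : ∀ t ω, 0 ≤ B2 t ω := fun t ω => le_ciInf fun N => (hZD N).2.2.2.1 t ω
    have hB1le : ∀ N t ω, B1 t ω ≤ (Z N).1 t ω := fun N t ω => ciInf_le (hbdd1 t ω) N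
    have hBeq : ∀ t ∈ Icc (0:ℝ) T, ∀ᵐ ω ∂P, X t ω = B1 t ω - B2 t ω := by
      intro t ht
      have hall : ∀ᵐ ω ∂P, ∀ N, X t ω = (Z N).1 t ω - (Z N).2 t ω :=
        ae_all_iff.2 fun N => (hZD N).2.2.2.2 t ht
      filter_upwards [hall] with ω hω
      have h1 : Tendsto (fun N => (Z N).1 t ω) atTop (nhds (B1 t ω)) :=
        tendsto_atTop_ciInf (hZanti1 t ω) (hbdd1 t ω)
      have h2 : Tendsto (fun N => (Z N).2 t ω) atTop (nhds (B2 t ω)) :=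
        tendsto_atTop_ciInf (hZanti2 t ω) (hbdd2 t ω)
      have h3 : Tendsto (fun N => (Z N).1 t ω - (Z N).2 t ω) atTop
          (nhds (B1 t ω - B2 t ω)) := h1.sub h2
      have h4 : (fun N => (Z N).1 t ω - (Z N).2 t ω) = fun _ : ℕ => X t ω :=
        funext fun N => (hω N).symm
      rw [h4] at h3
      exact (tendsto_nhds_unique h3 tendsto_const_nhds).symm
    have hBD : Dcp (B1, B2) := ⟨hB1S, hB2S, hB1p, hB2p, hBeq⟩
    -- the expectation of `B1` achieves the infimum at the times `d k`
    have hBint_d : ∀ k : ℕ, ∫ ω, B1 (d k) ω ∂P ≤ mfun (d k) := by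
      intro k
      by_contra hlt
      push_neg at hlt
      obtain ⟨n, hn⟩ := exists_nat_one_div_lt (sub_pos.2 hlt)
      have hstep : ∫ ω, B1 (d k) ω ∂P < mfun (d k) + 1 / (n + 1 : ℝ) := by
        set j := Nat.pair k n with hj
        have hu : j.unpair = (k, n) := Nat.unpair_pair k n
        have h1 : ∫ ω, B1 (d k) ω ∂P ≤ ∫ ω, (Z j).1 (d k) ω ∂P :=
          integral_mono (hB1S.integrable _) ((hZD j).1.integrable _)
            (fun ω => hB1le j _ ω)
        have h2 : ∫ ω, (Z j).1 (d k) ω ∂P ≤ ∫ ω, (g j).1 (d k) ω ∂P :=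
          integral_mono ((hZD j).1.integrable _) ((hgD j).1.integrable _)
            (fun ω => hZg j _ ω)
        have h3 := hglt j
        rw [hu] at h3
        exact lt_of_le_of_lt (h1.trans h2) h3
      linarith
    -- the expectation of `B1` achieves the infimum everywhere
    have hle_all : ∀ t, ∫ ω, B1 t ω ∂P ≤ mfun t := by
      intro t
      by_cases hD : t ∈ ({x | ¬ContinuousAt mfun x} ∪ Set.range ((↑) : ℚ → ℝ))
      · rw [hd] at hD
        obtain ⟨k, rfl⟩ := hD
        exact hBint_d k
      · have hcont : ContinuousAt mfun t := by
          by_contra h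
          exact hD (Or.inl h)
        by_contra hlt
        push_neg at hlt
        set ε := ∫ ω, B1 t ω ∂P - mfun t with hεdef
        have hε : 0 < ε := sub_pos.2 hlt
        have hev : ∀ᶠ s in nhds t, mfun s < mfun t + ε :=
          hcont.eventually (gt_mem_nhds (lt_add_of_pos_right _ hε))
        obtain ⟨δ, hδpos, hδ⟩ := Metric.eventually_nhds_iff.1 hev
        obtain ⟨q, hq1, hq2⟩ := exists_rat_btwn (sub_lt_self t hδpos)
        have hqmem : ((q:ℝ)) ∈ ({x | ¬ContinuousAt mfun x} ∪ Set.range ((↑) : ℚ → ℝ)) :=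
          Or.inr ⟨q, rfl⟩
        rw [hd] at hqmem
        obtain ⟨k, hk⟩ := hqmem
        have hqd : dist ((q:ℝ)) t < δ := by
          rw [Real.dist_eq, abs_of_nonpos (by linarith)]
          linarith
        have h1 : ∫ ω, B1 t ω ∂P ≤ ∫ ω, B1 (q:ℝ) ω ∂P :=
          integral_anti hB1S (le_of_lt hq2)
        have h2 : ∫ ω, B1 (q:ℝ) ω ∂P ≤ mfun (q:ℝ) := by
          rw [← hk]; exact hBint_d k
        have h3 : mfun (q:ℝ) < mfun t + ε := hδ hqd
        have : ∫ ω, B1 t ω ∂P < mfun t + ε := by linarith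
        rw [hεdef] at this
        linarith
    -- conclusion
    refine ⟨B1, B2, hB1S, hB2S, hB1p, hB2p, hBeq, ?_⟩
    intro X1 X2 h1 h2 h1p h2p heq t ht
    have hXD : Dcp (X1, X2) := ⟨h1, h2, h1p, h2p, heq⟩
    have hWD : Dcp (pairInf (B1, B2) (X1, X2)) := hmin _ _ hBD hXD
    set W1 : ℝ → Ω → ℝ := fun t ω => B1 t ω ⊓ X1 t ω with hW1def
    have hWfst : (pairInf (B1, B2) (X1, X2)).1 = W1 := rfl
    have hWleB : ∀ ω, W1 t ω ≤ B1 t ω := fun ω => inf_le_left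
    have hW1int : Integrable (W1 t) P := hWD.1.integrable t
    have hintle : ∫ ω, W1 t ω ∂P ≤ ∫ ω, B1 t ω ∂P :=
      integral_mono hW1int (hB1S.integrable t) hWleB
    have hintge : mfun t ≤ ∫ ω, W1 t ω ∂P := hm_le _ hWD t
    have hzero : ∫ ω, (B1 t ω - W1 t ω) ∂P = 0 := by
      rw [integral_sub (hB1S.integrable t) hW1int]
      have := hle_all t
      linarith
    have haeeq : (fun ω => B1 t ω - W1 t ω) =ᵐ[P] 0 :=
      (integral_eq_zero_iff_of_nonneg_ae
        (Eventually.of_forall fun ω => sub_nonneg.2 (hWleB ω))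
        ((hB1S.integrable t).sub hW1int)).1 hzero
    filter_upwards [haeeq, hBeq t ht, heq t ht] with ω h0 hb hx
    have h0' : B1 t ω = B1 t ω ⊓ X1 t ω := by
      have : B1 t ω - W1 t ω = 0 := h0
      have hW : W1 t ω = B1 t ω ⊓ X1 t ω := rfl
      linarith [hW ▸ this]
    have hle1 : B1 t ω ≤ X1 t ω := h0' ▸ inf_le_right
    exact ⟨hle1, by linarith⟩
  · rintro ⟨B1, B2, h1, h2, h3, h4, h5, _⟩
    exact ⟨B1, B2, h1, h2, h3, h4, h5⟩
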